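/- arXiv:2602.02560 — 2 statements merged into one kernel-verified Lean document; each statement's English description precedes it below -/
import Mathlib

section
/- For probability measures μ and ν on ℝ and real numbers 0 < s ≤ t, one has kl(μ ∗ gaussianReal 0 t ‖ ν ∗ gaussianReal 0 t) ≤ kl(μ ∗ gaussianReal 0 s ‖ ν ∗ gaussianReal 0 s) ≤ kl(μ ‖ ν). In particular, the map sending the diffusion time t to the KL divergence between the time-t marginals of the Gaussian forward process started at μ and at ν is antitone, so the two evolving distributions become increasingly indistinguishable over time. -/
open MeasureTheory ProbabilityTheory Classical

/-- The Kullback–Leibler divergence between two measures, following Mathlib's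
`ProbabilityTheory.kl`: the integral of the log-likelihood ratio `log (dμ/dν)` with respect
to `μ` if `μ ≪ ν` and the log-likelihood ratio is `μ`-integrable, and `+∞` otherwise. -/
noncomputable def kl {α : Type*} [MeasurableSpace α] (μ ν : Measure α) : EReal :=
  if μ ≪ ν ∧ Integrable (llr μ ν) μ then ((∫ x, llr μ ν x ∂μ : ℝ) : EReal) else ⊤

open scoped NNReal ENNReal
open Real


section DPI

variable {α β : Type*} [MeasurableSpace α] [MeasurableSpace β]

lemma neg_log_mul_le {a : ℝ} (ha : 0 ≤ a) : max (-Real.log a) 0 * a ≤ 1 := by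
  rcases eq_or_lt_of_le ha with h | h
  · simp [← h]
  · have h1 : -Real.log a ≤ a⁻¹ := by
      rw [← Real.log_inv]
      have := Real.log_le_sub_one_of_pos (x := a⁻¹) (by positivity)
      linarith
    have : max (-Real.log a) 0 ≤ a⁻¹ := max_le h1 (by positivity)
    calc max (-Real.log a) 0 * a ≤ a⁻¹ * a := by
          exact mul_le_mul_of_nonneg_right this ha
      _ = 1 := inv_mul_cancel₀ h.ne'
  
lemma kl_map_le (P Q : Measure α) [IsProbabilityMeasure P] [IsProbabilityMeasure Q]
    {T : α → β} (hT : Measurable T) :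
    kl (P.map T) (Q.map T) ≤ kl P Q := by
  haveI : IsProbabilityMeasure (P.map T) := Measure.isProbabilityMeasure_map hT.aemeasurable
  haveI : IsProbabilityMeasure (Q.map T) := Measure.isProbabilityMeasure_map hT.aemeasurable
  by_cases hPQ : P ≪ Q ∧ Integrable (llr P Q) P
  swap
  · have hkl : kl P Q = ⊤ := by rw [kl, if_neg hPQ]
    rw [hkl]; exact le_top
  obtain ⟨hac, hint⟩ := hPQ
  set g' := P.rnDeriv Q with hg'def
  set h' := (P.map T).rnDeriv (Q.map T) with hh'def
  have hTac : P.map T ≪ Q.map T := hac.map hT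
  have hh'm : Measurable h' := Measure.measurable_rnDeriv _ _
  have hg'm : Measurable g' := Measure.measurable_rnDeriv _ _
  set u : α → ℝ := fun x => (h' (T x)).toReal / (g' x).toReal with hudef
  have hum : Measurable u := ((hh'm.comp hT).ennreal_toReal).div hg'm.ennreal_toReal
  have hu0 : ∀ x, 0 ≤ u x := fun x => div_nonneg ENNReal.toReal_nonneg ENNReal.toReal_nonneg
  -- Step 1
  have step1 : ∫⁻ x, ENNReal.ofReal ((h' (T x)).toReal) ∂Q ≤ 1 := by
    rw [← lintegral_map hh'm.ennreal_toReal.ennreal_ofReal hT]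
    calc ∫⁻ y, ENNReal.ofReal ((h' y).toReal) ∂(Q.map T)
        ≤ ∫⁻ y, h' y ∂(Q.map T) := lintegral_mono fun y => ENNReal.ofReal_toReal_le
      _ ≤ (P.map T) Set.univ := Measure.lintegral_rnDeriv_le
      _ = 1 := measure_univ
  -- Step 2
  have hPrep : Q.withDensity g' = P := Measure.withDensity_rnDeriv_eq P Q hac
  have step2 : ∫⁻ x, ENNReal.ofReal (u x) ∂P ≤ 1 := by
    rw [← hPrep, lintegral_withDensity_eq_lintegral_mul _ hg'm hum.ennreal_ofReal]
    refine le_trans (lintegral_mono_ae ?_) step1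
    filter_upwards [Measure.rnDeriv_lt_top P Q] with x hx
    rcases eq_or_ne (g' x) 0 with h0 | h0
    · simp [hudef, h0]
    · have hgpos : 0 < (g' x).toReal := ENNReal.toReal_pos h0 hx.ne
      have : g' x = ENNReal.ofReal ((g' x).toReal) := (ENNReal.ofReal_toReal hx.ne).symm
      rw [Pi.mul_apply, this, ← ENNReal.ofReal_mul hgpos.le]
      refine ENNReal.ofReal_le_ofReal (le_of_eq ?_)
      rw [hudef]
      field_simp
  -- u integrable with integral ≤ 1
  have huint : Integrable u P := by
    refine ⟨hum.aestronglyMeasurable, ?_⟩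
    rw [HasFiniteIntegral]
    calc ∫⁻ x, ‖u x‖₊ ∂P = ∫⁻ x, ENNReal.ofReal (u x) ∂P := by
          refine lintegral_congr fun x => ?_
          exact Real.enorm_eq_ofReal (hu0 x)
      _ ≤ 1 := step2
      _ < ⊤ := ENNReal.one_lt_top
  have huint1 : ∫ x, u x ∂P ≤ 1 := by
    rw [integral_eq_lintegral_of_nonneg_ae (Filter.Eventually.of_forall hu0)
      hum.aestronglyMeasurable]
    calc (∫⁻ x, ENNReal.ofReal (u x) ∂P).toReal ≤ (1 : ℝ≥0∞).toReal :=
          ENNReal.toReal_mono ENNReal.one_ne_top step2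
      _ = 1 := by simp
  -- a.e. facts
  have hgpos : ∀ᵐ x ∂P, 0 < g' x := Measure.rnDeriv_pos hac
  have hgfin : ∀ᵐ x ∂P, g' x < ⊤ := hac.ae_le (Measure.rnDeriv_lt_top P Q)
  have hhpos : ∀ᵐ x ∂P, 0 < h' (T x) := by
    have := Measure.rnDeriv_pos hTac
    exact (ae_map_iff hT.aemeasurable (measurableSet_lt measurable_const hh'm)).mp this
  have hhfin : ∀ᵐ x ∂P, h' (T x) < ⊤ := by
    have := hTac.ae_le (Measure.rnDeriv_lt_top (P.map T) (Q.map T))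
    exact (ae_map_iff hT.aemeasurable (measurableSet_lt hh'm measurable_const)).mp this
  set φ : α → ℝ := fun x => Real.log ((h' (T x)).toReal) with hφdef
  have hφm : Measurable φ := (hh'm.comp hT).ennreal_toReal.log
  have hkeyae : ∀ᵐ x ∂P, φ x ≤ u x - 1 + llr P Q x := by
    filter_upwards [hgpos, hgfin, hhpos, hhfin] with x h1 h2 h3 h4
    have hg0 : 0 < (g' x).toReal := ENNReal.toReal_pos h1.ne' h2.ne
    have hh0 : 0 < (h' (T x)).toReal := ENNReal.toReal_pos h3.ne' h4.ne
    have hupos : 0 < u x := div_pos hh0 hg0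
    have hlogu : Real.log (u x) = φ x - Real.log ((g' x).toReal) := by
      rw [hudef]
      exact Real.log_div hh0.ne' hg0.ne'
    have hllr : llr P Q x = Real.log ((g' x).toReal) := rfl
    have := Real.log_le_sub_one_of_pos hupos
    rw [hllr]
    linarith
  have hsub : Integrable (fun x => u x - 1) P := huint.sub (integrable_const 1)
  have hIu : Integrable (fun x => u x - 1 + llr P Q x) P := hsub.add hint
  -- negative part bound
  have hnegm : Measurable (fun y => ENNReal.ofReal (max (-Real.log ((h' y).toReal)) 0)) :=
    (hh'm.ennreal_toReal.log.neg.max measurable_const).ennreal_ofReal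
  have hneg : ∫⁻ x, ENNReal.ofReal (max (-φ x) 0) ∂P ≤ 1 := by
    have h1 : ∫⁻ x, ENNReal.ofReal (max (-φ x) 0) ∂P
        = ∫⁻ y, ENNReal.ofReal (max (-Real.log ((h' y).toReal)) 0) ∂(P.map T) :=
      (lintegral_map hnegm hT).symm
    rw [h1, ← Measure.withDensity_rnDeriv_eq _ _ hTac,
      lintegral_withDensity_eq_lintegral_mul _ hh'm hnegm]
    have hbound : ∀ᵐ y ∂(Q.map T),
        (h' * fun y => ENNReal.ofReal (max (-Real.log ((h' y).toReal)) 0)) y ≤ 1 := by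
      filter_upwards [Measure.rnDeriv_lt_top (P.map T) (Q.map T)] with y hy
      rcases eq_or_ne (h' y) 0 with h0 | h0
      · simp [Pi.mul_apply, h0]
      · have hrepr : h' y = ENNReal.ofReal ((h' y).toReal) := (ENNReal.ofReal_toReal hy.ne).symm
        rw [Pi.mul_apply]
        nth_rewrite 1 [hrepr]
        rw [← ENNReal.ofReal_mul ENNReal.toReal_nonneg]
        calc ENNReal.ofReal ((h' y).toReal * max (-Real.log ((h' y).toReal)) 0)
            ≤ ENNReal.ofReal 1 := by
              refine ENNReal.ofReal_le_ofReal ?_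
              rw [mul_comm]
              exact neg_log_mul_le ENNReal.toReal_nonneg
          _ = 1 := ENNReal.ofReal_one
    calc ∫⁻ y, (h' * fun y => ENNReal.ofReal (max (-Real.log ((h' y).toReal)) 0)) y ∂(Q.map T)
        ≤ ∫⁻ _, 1 ∂(Q.map T) := lintegral_mono_ae hbound
      _ = 1 := by simp
  -- positive part bound
  have hpos : ∫⁻ x, ENNReal.ofReal (max (φ x) 0) ∂P < ⊤ := by
    have hb : ∀ᵐ x ∂P, ENNReal.ofReal (max (φ x) 0)
        ≤ (‖(fun x => u x - 1 + llr P Q x) x‖₊ : ℝ≥0∞) := by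
      filter_upwards [hkeyae] with x hx
      rw [← enorm_eq_nnnorm, Real.enorm_eq_ofReal_abs]
      exact ENNReal.ofReal_le_ofReal (max_le (hx.trans (le_abs_self _)) (abs_nonneg _))
    calc ∫⁻ x, ENNReal.ofReal (max (φ x) 0) ∂P
        ≤ ∫⁻ x, (‖u x - 1 + llr P Q x‖₊ : ℝ≥0∞) ∂P := lintegral_mono_ae hb
      _ < ⊤ := hIu.2
  have hφint : Integrable φ P := by
    refine ⟨hφm.aestronglyMeasurable, ?_⟩
    rw [HasFiniteIntegral]
    have heq : ∀ x, (‖φ x‖₊ : ℝ≥0∞)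
        = ENNReal.ofReal (max (φ x) 0) + ENNReal.ofReal (max (-φ x) 0) := by
      intro x
      rw [← enorm_eq_nnnorm, Real.enorm_eq_ofReal_abs, ← ENNReal.ofReal_add (le_max_right _ _) (le_max_right _ _)]
      congr 1
      rcases le_total 0 (φ x) with h | h
      · rw [abs_of_nonneg h, max_eq_left h, max_eq_right (by linarith)]; ring
      · rw [abs_of_nonpos h, max_eq_right h, max_eq_left (by linarith)]; ring
    calc ∫⁻ x, (‖φ x‖₊ : ℝ≥0∞) ∂P
        = ∫⁻ x, (ENNReal.ofReal (max (φ x) 0) + ENNReal.ofReal (max (-φ x) 0)) ∂P :=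
          lintegral_congr heq
      _ = (∫⁻ x, ENNReal.ofReal (max (φ x) 0) ∂P) + ∫⁻ x, ENNReal.ofReal (max (-φ x) 0) ∂P :=
          lintegral_add_left ((hφm.max measurable_const).ennreal_ofReal) _
      _ < ⊤ := ENNReal.add_lt_top.mpr ⟨hpos, lt_of_le_of_lt hneg ENNReal.one_lt_top⟩
  have hineq : ∫ x, φ x ∂P ≤ ∫ x, llr P Q x ∂P := by
    have h1 : ∫ x, φ x ∂P ≤ ∫ x, (u x - 1 + llr P Q x) ∂P :=
      integral_mono_ae hφint hIu hkeyae
    have h2 : ∫ x, (u x - 1 + llr P Q x) ∂P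
        = ((∫ x, u x ∂P) - 1) + ∫ x, llr P Q x ∂P := by
      rw [integral_add hsub hint, integral_sub huint (integrable_const 1), integral_const]
      simp
    rw [h2] at h1
    linarith
  have hTint : Integrable (llr (P.map T) (Q.map T)) (P.map T) := by
    refine (integrable_map_measure (stronglyMeasurable_llr _ _).aestronglyMeasurable
      hT.aemeasurable).mpr ?_
    exact hφint
  have hTval : ∫ y, llr (P.map T) (Q.map T) y ∂(P.map T) = ∫ x, φ x ∂P :=
    integral_map hT.aemeasurable (stronglyMeasurable_llr _ _).aestronglyMeasurable
  rw [kl, kl, if_pos ⟨hTac, hTint⟩, if_pos ⟨hac, hint⟩]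
  exact EReal.coe_le_coe_iff.mpr (hTval ▸ hineq)

end DPI
section ProdKL

variable {α β : Type*} [MeasurableSpace α] [MeasurableSpace β]

lemma withDensity_fst_prod {μ ν : Measure α} (γ : Measure β) [SFinite μ] [SFinite ν] [SFinite γ]
    {f : α → ℝ≥0∞} (hf : Measurable f) (h : ν.withDensity f = μ) :
    (ν.prod γ).withDensity (fun p => f p.1) = μ.prod γ := by
  refine Measure.ext fun s hs => ?_
  rw [withDensity_apply _ hs, ← h]
  haveI : SFinite (ν.withDensity f) := by rw [h]; infer_instance
  rw [Measure.prod_apply hs]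
  rw [lintegral_withDensity_eq_lintegral_mul _ hf (measurable_measure_prodMk_left hs)]
  rw [← lintegral_indicator hs]
  have hm : Measurable (s.indicator (fun p : α × β => f p.1)) :=
    (hf.comp measurable_fst).indicator hs
  rw [MeasureTheory.lintegral_prod _ hm.aemeasurable]
  refine lintegral_congr fun x => ?_
  rw [Pi.mul_apply]
  calc ∫⁻ y, s.indicator (fun p : α × β => f p.1) (x, y) ∂γ
      = ∫⁻ y, f x * (Prod.mk x ⁻¹' s).indicator (fun _ => 1) y ∂γ := by
        refine lintegral_congr fun y => ?_
        by_cases hxy : (x, y) ∈ s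
        · rw [Set.indicator_of_mem hxy,
            Set.indicator_of_mem (show y ∈ Prod.mk x ⁻¹' s from hxy), mul_one]
        · rw [Set.indicator_of_notMem hxy,
            Set.indicator_of_notMem (show y ∉ Prod.mk x ⁻¹' s from hxy), mul_zero]
    _ = f x * γ (Prod.mk x ⁻¹' s) := by
        have hm2 : Measurable ((Prod.mk x ⁻¹' s).indicator (fun _ : β => (1 : ℝ≥0∞))) :=
          measurable_one.indicator (measurable_prodMk_left hs)
        rw [lintegral_const_mul _ hm2, lintegral_indicator (measurable_prodMk_left hs)]
        simp
  
lemma rnDeriv_prod_ae (μ ν : Measure α) [IsFiniteMeasure μ] [SigmaFinite ν]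
    (γ : Measure β) [SigmaFinite γ] [SFinite γ] (hac : μ ≪ ν) :
    (fun p : α × β => μ.rnDeriv ν p.1) =ᵐ[ν.prod γ] (μ.prod γ).rnDeriv (ν.prod γ) := by
  refine Measure.eq_rnDeriv ((Measure.measurable_rnDeriv μ ν).comp measurable_fst)
    (Measure.MutuallySingular.zero_left) ?_
  rw [zero_add]
  exact (withDensity_fst_prod γ (Measure.measurable_rnDeriv μ ν)
    (Measure.withDensity_rnDeriv_eq μ ν hac)).symm

lemma kl_prod_le (μ ν : Measure α) [IsProbabilityMeasure μ] [IsProbabilityMeasure ν]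
    (γ : Measure β) [IsProbabilityMeasure γ] :
    kl (μ.prod γ) (ν.prod γ) ≤ kl μ ν := by
  by_cases h : μ ≪ ν ∧ Integrable (llr μ ν) μ
  swap
  · have hkl : kl μ ν = ⊤ := by rw [kl, if_neg h]
    rw [hkl]; exact le_top
  obtain ⟨hac, hint⟩ := h
  have hacp : μ.prod γ ≪ ν.prod γ := hac.prod (Measure.AbsolutelyContinuous.rfl)
  have hae : llr (μ.prod γ) (ν.prod γ) =ᵐ[μ.prod γ] fun p => llr μ ν p.1 := by
    have h1 := rnDeriv_prod_ae μ ν γ hac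
    have h2 : (fun p : α × β => μ.rnDeriv ν p.1)
        =ᵐ[μ.prod γ] (μ.prod γ).rnDeriv (ν.prod γ) := hacp.ae_le h1
    filter_upwards [h2] with p hp
    rw [llr, llr, ← hp]
  have hmap : (μ.prod γ).map Prod.fst = μ := by
    rw [Measure.map_fst_prod]; simp
  have hintc : Integrable (fun p : α × β => llr μ ν p.1) (μ.prod γ) := by
    have h1 : Integrable (llr μ ν) ((μ.prod γ).map Prod.fst) := by rw [hmap]; exact hint
    exact (integrable_map_measure (stronglyMeasurable_llr μ ν).aestronglyMeasurable
      measurable_fst.aemeasurable).mp h1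
  have hint2 : Integrable (llr (μ.prod γ) (ν.prod γ)) (μ.prod γ) := hintc.congr hae.symm
  have hval : ∫ p, llr (μ.prod γ) (ν.prod γ) p ∂(μ.prod γ) = ∫ x, llr μ ν x ∂μ := by
    rw [integral_congr_ae hae, MeasureTheory.integral_fun_fst]
    simp
  rw [kl, kl, if_pos ⟨hacp, hint2⟩, if_pos ⟨hac, hint⟩, hval]

end ProdKL
section ConvKL

lemma conv_eq_map (μ γ : Measure ℝ) :
    μ.conv γ = (μ.prod γ).map (fun p : ℝ × ℝ => p.1 + p.2) := rfl

lemma kl_conv_le (μ ν : Measure ℝ) [IsProbabilityMeasure μ] [IsProbabilityMeasure ν]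
    (γ : Measure ℝ) [IsProbabilityMeasure γ] :
    kl (μ.conv γ) (ν.conv γ) ≤ kl μ ν := by
  rw [conv_eq_map, conv_eq_map]
  calc kl ((μ.prod γ).map (fun p : ℝ × ℝ => p.1 + p.2))
        ((ν.prod γ).map (fun p : ℝ × ℝ => p.1 + p.2))
      ≤ kl (μ.prod γ) (ν.prod γ) :=
        kl_map_le _ _ (measurable_fst.add measurable_snd)
    _ ≤ kl μ ν := kl_prod_le μ ν γ

lemma conv_assoc (μ ν ρ : Measure ℝ) [SFinite μ] [SFinite ν] [SFinite ρ] :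
    (μ.conv ν).conv ρ = μ.conv (ν.conv ρ) := by
  have hadd : Measurable (fun p : ℝ × ℝ => p.1 + p.2) := measurable_fst.add measurable_snd
  rw [conv_eq_map, conv_eq_map, conv_eq_map, conv_eq_map]
  have h1 : ((μ.prod ν).map (fun p : ℝ × ℝ => p.1 + p.2)).prod ρ
      = ((μ.prod ν).prod ρ).map (Prod.map (fun p : ℝ × ℝ => p.1 + p.2) id) := by
    rw [← Measure.map_prod_map _ _ hadd measurable_id, Measure.map_id]
  have h2 : μ.prod ((ν.prod ρ).map (fun p : ℝ × ℝ => p.1 + p.2))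
      = (μ.prod (ν.prod ρ)).map (Prod.map id (fun p : ℝ × ℝ => p.1 + p.2)) := by
    rw [← Measure.map_prod_map _ _ measurable_id hadd, Measure.map_id]
  rw [h1, h2, ← Measure.prodAssoc_prod (μ := μ) (ν := ν) (τ := ρ),
    Measure.map_map hadd (hadd.prodMap measurable_id),
    Measure.map_map hadd (measurable_id.prodMap hadd),
    Measure.map_map (hadd.comp (measurable_id.prodMap hadd))
      MeasurableEquiv.prodAssoc.measurable]
  congr 1
  funext p
  rcases p with ⟨⟨x, y⟩, z⟩
  simp [Function.comp, Prod.map, MeasurableEquiv.prodAssoc, Equiv.prodAssoc, add_assoc]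

end ConvKL
section Gauss

lemma conv_withDensity {f g : ℝ → ℝ≥0∞} (hf : Measurable f) (hg : Measurable g) :
    (volume.withDensity f).conv (volume.withDensity g)
      = volume.withDensity (fun z => ∫⁻ x, f x * g (z - x)) := by
  have hadd : Measurable (fun p : ℝ × ℝ => p.1 + p.2) := measurable_fst.add measurable_snd
  have hg2 : Measurable (fun p : ℝ × ℝ => g (p.2 - p.1)) :=
    hg.comp (measurable_snd.sub measurable_fst)
  refine Measure.ext fun A hA => ?_
  rw [conv_eq_map, Measure.map_apply hadd hA, withDensity_apply _ hA,
    Measure.prod_apply (hadd hA)]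
  have hinner : ∀ x : ℝ,
      (volume.withDensity g) (Prod.mk x ⁻¹' ((fun p : ℝ × ℝ => p.1 + p.2) ⁻¹' A))
      = ∫⁻ z in A, g (z - x) := by
    intro x
    have hpre : Prod.mk x ⁻¹' ((fun p : ℝ × ℝ => p.1 + p.2) ⁻¹' A)
        = (fun y => x + y) ⁻¹' A := rfl
    have hAx : MeasurableSet ((fun y => x + y) ⁻¹' A) :=
      hA.preimage (measurable_id.const_add x)
    rw [hpre, withDensity_apply _ hAx]
    have hmp := measurePreserving_add_left (volume : Measure ℝ) x
    have hkey := hmp.setLIntegral_comp_preimage hA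
      (hg.comp (measurable_id.sub measurable_const) : Measurable fun z => g (z - x))
    calc ∫⁻ y in (fun y => x + y) ⁻¹' A, g y
        = ∫⁻ y in (fun y => x + y) ⁻¹' A, g (x + y - x) := by
          refine setLIntegral_congr_fun hAx
            (fun y _ => ?_)
          congr 1
          ring
      _ = ∫⁻ z in A, g (z - x) := hkey
  calc ∫⁻ x, (volume.withDensity g) (Prod.mk x ⁻¹' ((fun p : ℝ × ℝ => p.1 + p.2) ⁻¹' A))
        ∂(volume.withDensity f)
      = ∫⁻ x, (∫⁻ z in A, g (z - x)) ∂(volume.withDensity f) :=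
        lintegral_congr fun x => hinner x
    _ = ∫⁻ x, f x * ∫⁻ z in A, g (z - x) := by
        have hmeas : Measurable fun x : ℝ => ∫⁻ z in A, g (z - x) :=
          Measurable.lintegral_prod_right' (f := fun p : ℝ × ℝ => g (p.2 - p.1)) hg2
        rw [lintegral_withDensity_eq_lintegral_mul _ hf hmeas]
        rfl
    _ = ∫⁻ x, ∫⁻ z in A, f x * g (z - x) := by
        refine lintegral_congr fun x => ?_
        exact (lintegral_const_mul (f x)
          (hg.comp (measurable_id.sub measurable_const) :
            Measurable fun z => g (z - x))).symm
    _ = ∫⁻ z in A, ∫⁻ x, f x * g (z - x) :=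
        lintegral_lintegral_swap ((hf.comp measurable_fst).mul hg2).aemeasurable

end Gauss
lemma gaussianPDFReal_mul {s r : ℝ≥0} (hs : s ≠ 0) (hr : r ≠ 0) (y x : ℝ) :
    gaussianPDFReal 0 s x * gaussianPDFReal 0 r (y - x)
      = gaussianPDFReal 0 (s + r) y
        * gaussianPDFReal ((s : ℝ) * y / ((s : ℝ) + (r : ℝ))) (s * r / (s + r)) x := by
  have hs' : (0 : ℝ) < s := by positivity
  have hr' : (0 : ℝ) < r := by positivity
  have hsr' : (0 : ℝ) < (s : ℝ) + r := by linarith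
  simp only [gaussianPDFReal_def]
  push_cast
  have hconst : (Real.sqrt (2 * π * s))⁻¹ * (Real.sqrt (2 * π * r))⁻¹
      = (Real.sqrt (2 * π * ((s : ℝ) + r)))⁻¹
        * (Real.sqrt (2 * π * ((s : ℝ) * r / ((s : ℝ) + r))))⁻¹ := by
    rw [← mul_inv, ← Real.sqrt_mul (by positivity), ← mul_inv,
      ← Real.sqrt_mul (by positivity)]
    congr 2
    field_simp
  have hexp : rexp (-(x - 0) ^ 2 / (2 * s)) * rexp (-(y - x - 0) ^ 2 / (2 * r))
      = rexp (-(y - 0) ^ 2 / (2 * ((s : ℝ) + r)))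
        * rexp (-(x - (s : ℝ) * y / ((s : ℝ) + r)) ^ 2
            / (2 * ((s : ℝ) * r / ((s : ℝ) + r)))) := by
    rw [← Real.exp_add, ← Real.exp_add]
    congr 1
    field_simp
    ring
  calc (Real.sqrt (2 * π * s))⁻¹ * rexp (-(x - 0) ^ 2 / (2 * s))
        * ((Real.sqrt (2 * π * r))⁻¹ * rexp (-(y - x - 0) ^ 2 / (2 * r)))
      = (Real.sqrt (2 * π * s))⁻¹ * (Real.sqrt (2 * π * r))⁻¹
        * (rexp (-(x - 0) ^ 2 / (2 * s)) * rexp (-(y - x - 0) ^ 2 / (2 * r))) := by ring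
    _ = (Real.sqrt (2 * π * ((s : ℝ) + r)))⁻¹
        * (Real.sqrt (2 * π * ((s : ℝ) * r / ((s : ℝ) + r))))⁻¹
        * (rexp (-(y - 0) ^ 2 / (2 * ((s : ℝ) + r)))
          * rexp (-(x - (s : ℝ) * y / ((s : ℝ) + r)) ^ 2
              / (2 * ((s : ℝ) * r / ((s : ℝ) + r))))) := by rw [hconst, hexp]
    _ = _ := by ring

lemma lintegral_gaussianPDF_conv {s r : ℝ≥0} (hs : s ≠ 0) (hr : r ≠ 0) (z : ℝ) :
    ∫⁻ x, gaussianPDF 0 s x * gaussianPDF 0 r (z - x) = gaussianPDF 0 (s + r) z := by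
  have hsr : s + r ≠ 0 := by
    intro h
    exact hs (by simpa using (add_eq_zero.mp h).1)
  have hv : s * r / (s + r) ≠ 0 := div_ne_zero (mul_ne_zero hs hr) hsr
  calc ∫⁻ x, gaussianPDF 0 s x * gaussianPDF 0 r (z - x)
      = ∫⁻ x, gaussianPDF 0 (s + r) z
          * gaussianPDF ((s : ℝ) * z / ((s : ℝ) + (r : ℝ))) (s * r / (s + r)) x := by
        refine lintegral_congr fun x => ?_
        rw [gaussianPDF_def, gaussianPDF_def,
          ← ENNReal.ofReal_mul (gaussianPDFReal_nonneg _ _ _), gaussianPDF_def, gaussianPDF_def,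
          ← ENNReal.ofReal_mul (gaussianPDFReal_nonneg _ _ _)]
        rw [gaussianPDFReal_mul hs hr z x]
    _ = gaussianPDF 0 (s + r) z := by
        rw [lintegral_const_mul _ (measurable_gaussianPDF _ _),
          lintegral_gaussianPDF_eq_one _ hv, mul_one]

lemma gaussianReal_conv (s r : ℝ≥0) :
    (gaussianReal 0 s).conv (gaussianReal 0 r) = gaussianReal 0 (s + r) := by
  rcases eq_or_ne s 0 with h | hs
  · subst h
    rw [gaussianReal_zero_var, zero_add]
    simp
  rcases eq_or_ne r 0 with h | hr
  · subst h
    rw [gaussianReal_zero_var, add_zero]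
    simp
  have hsr : s + r ≠ 0 := by
    intro h
    exact hs (by simpa using (add_eq_zero.mp h).1)
  rw [gaussianReal_of_var_ne_zero _ hs, gaussianReal_of_var_ne_zero _ hr,
    gaussianReal_of_var_ne_zero _ hsr,
    conv_withDensity (measurable_gaussianPDF _ _) (measurable_gaussianPDF _ _)]
  congr 1
  funext z
  exact lintegral_gaussianPDF_conv hs hr z

/-- Monotone data-processing for the Gaussian (variance-exploding) forward diffusion:
for `0 < s ≤ t`, convolving with a centered Gaussian of variance `t` gives a KL divergence
no larger than convolving with variance `s`, which in turn is no larger than the original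
KL divergence. Hence the KL divergence between the evolving laws is antitone in time. -/
theorem kl_conv_gaussian_antitone (μ ν : Measure ℝ)
    [IsProbabilityMeasure μ] [IsProbabilityMeasure ν]
    (s t : ℝ≥0) (hs : 0 < s) (hst : s ≤ t) :
    kl (μ.conv (gaussianReal 0 t)) (ν.conv (gaussianReal 0 t)) ≤
        kl (μ.conv (gaussianReal 0 s)) (ν.conv (gaussianReal 0 s)) ∧
    kl (μ.conv (gaussianReal 0 s)) (ν.conv (gaussianReal 0 s)) ≤ kl μ ν := by
  constructor
  · have hgt : gaussianReal 0 t = (gaussianReal 0 s).conv (gaussianReal 0 (t - s)) := by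
      rw [gaussianReal_conv, add_tsub_cancel_of_le hst]
    have h1 : μ.conv (gaussianReal 0 t)
        = (μ.conv (gaussianReal 0 s)).conv (gaussianReal 0 (t - s)) := by
      rw [hgt, conv_assoc]
    have h2 : ν.conv (gaussianReal 0 t)
        = (ν.conv (gaussianReal 0 s)).conv (gaussianReal 0 (t - s)) := by
      rw [hgt, conv_assoc]
    rw [h1, h2]
    exact kl_conv_le _ _ _
  · exact kl_conv_le _ _ _
end

section
/- (Symmetry of Shapley values.) Let v be a value function on subsets of [d] and let i, j ∈ [d] be distinct players such that v(T ∪ {i}) = v(T ∪ {j}) for every T ⊆ [d] ∖ {i, j}. Then their Shapley values coincide: φ_i = φ_j. -/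
open Finset

/-- The Shapley value of player `i` with respect to a value function `v`:
`φ_i = Σ_{T ⊆ [d]∖{i}} (|T|! · (d − |T| − 1)!)/d! · (v(T ∪ {i}) − v(T))`. -/
noncomputable def shapleyValue {d : ℕ} (v : Finset (Fin d) → ℝ) (i : Fin d) : ℝ :=
  ∑ T ∈ ({i}ᶜ : Finset (Fin d)).powerset,
    ((T.card.factorial * (d - T.card - 1).factorial : ℕ) : ℝ) / (d.factorial : ℝ) *
      (v (insert i T) - v T)

lemma swap_image_eq {d : ℕ} (i j : Fin d) (hij : i ≠ j) (T : Finset (Fin d))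
    (hiT : i ∉ T) (hjT : j ∉ T) : T.image (Equiv.swap i j) = T := by
  apply Finset.image_congr (g := id) ?_ |>.trans (Finset.image_id)
  intro x hx
  exact Equiv.swap_apply_of_ne_of_ne (fun h => hiT (h ▸ hx)) (fun h => hjT (h ▸ hx))

/-- Symmetry of Shapley values: two players that contribute identically to every coalition
not containing either of them receive equal Shapley values. -/
theorem shapleyValue_symmetry {d : ℕ} (v : Finset (Fin d) → ℝ) (i j : Fin d) (hij : i ≠ j)
    (h : ∀ T : Finset (Fin d), T ⊆ ({i, j} : Finset (Fin d))ᶜ →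
      v (insert i T) = v (insert j T)) :
    shapleyValue v i = shapleyValue v j := by
  classical
  unfold shapleyValue
  have hmem : ∀ (a b : Fin d) (T : Finset (Fin d)), T ∈ ({a}ᶜ : Finset (Fin d)).powerset ↔
      a ∉ T := by
    intro a b T
    simp [Finset.mem_powerset, Finset.subset_compl_singleton]
  refine Finset.sum_nbij' (fun T => T.image (Equiv.swap i j))
    (fun T => T.image (Equiv.swap i j)) ?_ ?_ ?_ ?_ ?_
  · intro T hT
    rw [hmem i i] at hT
    rw [hmem j j]
    simp only [Finset.mem_image, not_exists]
    rintro x ⟨hx, hx'⟩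
    have : x = i := (Equiv.swap i j).injective (by simp [hx', Equiv.swap_apply_left])
    exact hT (this ▸ hx)
  · intro T hT
    rw [hmem j j] at hT
    rw [hmem i i]
    simp only [Finset.mem_image, not_exists]
    rintro x ⟨hx, hx'⟩
    have : x = j := (Equiv.swap i j).injective (by simp [hx', Equiv.swap_apply_right])
    exact hT (this ▸ hx)
  · intro T _
    simp only [Finset.image_image]
    rw [show (⇑(Equiv.swap i j) ∘ ⇑(Equiv.swap i j)) = id from funext fun x => Equiv.swap_apply_self i j x]
    exact Finset.image_id
  · intro T _
    simp only [Finset.image_image]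
    rw [show (⇑(Equiv.swap i j) ∘ ⇑(Equiv.swap i j)) = id from funext fun x => Equiv.swap_apply_self i j x]
    exact Finset.image_id
  · intro T hT
    rw [hmem i i] at hT
    have hcard : (T.image (Equiv.swap i j)).card = T.card :=
      Finset.card_image_of_injective _ (Equiv.swap i j).injective
    rw [hcard]
    congr 1
    by_cases hj : j ∈ T
    · -- T = insert j S with S = T.erase j
      set S := T.erase j with hS
      have hiS : i ∉ S := fun hx => hT (Finset.mem_of_mem_erase hx)
      have hjS : j ∉ S := Finset.notMem_erase _ _
      have hTS : T = insert j S := (Finset.insert_erase hj).symm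
      have himg : T.image (Equiv.swap i j) = insert i S := by
        rw [hTS, Finset.image_insert, Equiv.swap_apply_right,
          swap_image_eq i j hij S hiS hjS]
      have hSsub : S ⊆ ({i, j} : Finset (Fin d))ᶜ := by
        intro x hx
        simp only [Finset.mem_compl, Finset.mem_insert, Finset.mem_singleton]
        rintro (rfl | rfl)
        · exact hiS hx
        · exact hjS hx
      have h1 : v (T.image (Equiv.swap i j)) = v T := by
        rw [himg, hTS, h S hSsub]
      have h2 : insert j (T.image (Equiv.swap i j)) = insert i T := by
        rw [himg, hTS, Finset.insert_comm]
      rw [h1, h2]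
    · have himg : T.image (Equiv.swap i j) = T := swap_image_eq i j hij T hT hj
      rw [himg]
      have hTsub : T ⊆ ({i, j} : Finset (Fin d))ᶜ := by
        intro x hx
        simp only [Finset.mem_compl, Finset.mem_insert, Finset.mem_singleton]
        rintro (rfl | rfl)
        · exact hT hx
        · exact hj hx
      rw [h T hTsub]
end
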